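/- Let K ⊆ ℝ² be a closed connected set, x₀ ∈ K, and suppose K has Hausdorff 1-density 1/2 at x₀, i.e. limsup_{r→0} H¹(K ∩ B(x₀,r))/(2r) = 1/2. For each small r > 0 pick any point x_r ∈ K ∩ ∂B(x₀,r). Then (1/r)·d_H(K ∩ closure(B(x₀,r)), segment [x_r, x₀]) → 0 as r → 0, where d_H denotes the Hausdorff distance. -/

import Mathlib

open MeasureTheory Metric Set Filter
open scoped ENNReal Topology RealInnerProductSpace

set_option maxHeartbeats 1000000

local notation "E2" => EuclideanSpace ℝ (Fin 2)

/-- A 1-Lipschitz image bound: the H¹ measure of a preconnected set is at least the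
spread of any 1-Lipschitz functional on it. -/
lemma meas_ge_lip {C : Set E2} (hC : IsPreconnected C) {f : E2 → ℝ}
    (hf : LipschitzWith 1 f) {a b : E2} (ha : a ∈ C) (hb : b ∈ C) :
    ENNReal.ofReal (f b - f a) ≤ μH[1] C := by
  rcases le_or_gt (f b) (f a) with h | h
  · have h0 : ENNReal.ofReal (f b - f a) = 0 := ENNReal.ofReal_eq_zero.2 (by linarith)
    rw [h0]; exact zero_le
  have himg : Icc (f a) (f b) ⊆ f '' C :=
    hC.intermediate_value ha hb hf.continuous.continuousOn
  calc ENNReal.ofReal (f b - f a) = volume (Icc (f a) (f b)) := by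
        rw [Real.volume_Icc]
    _ = μH[1] (Icc (f a) (f b)) := by rw [MeasureTheory.hausdorffMeasure_real]
    _ ≤ μH[1] (f '' C) := measure_mono himg
    _ ≤ μH[1] C := by simpa using hf.hausdorffMeasure_image_le zero_le_one C

/-- Measure in a ball around a point of a preconnected set that extends past the ball. -/
lemma meas_ball_ge {C : Set E2} (hC : IsPreconnected C) {w far : E2}
    (hw : w ∈ C) (hfar : far ∈ C) {ρ : ℝ} (hρ : ρ ≤ dist far w) :
    ENNReal.ofReal ρ ≤ μH[1] (C ∩ ball w ρ) := by
  rcases le_or_gt ρ 0 with h | h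
  · have h0 : ENNReal.ofReal ρ = 0 := ENNReal.ofReal_eq_zero.2 h
    rw [h0]; exact zero_le
  have himg : Ico (0:ℝ) ρ ⊆ (fun z => dist z w) '' (C ∩ ball w ρ) := by
    intro v hv
    have h2 : Icc (dist w w) (dist far w) ⊆ (fun z => dist z w) '' C :=
      hC.intermediate_value hw hfar ((LipschitzWith.dist_left w).continuous.continuousOn)
    have hvmem : v ∈ Icc (dist w w) (dist far w) := by
      simp only [dist_self]
      exact ⟨hv.1, le_trans (le_of_lt hv.2) hρ⟩
    obtain ⟨z, hzC, hz⟩ := h2 hvmem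
    exact ⟨z, ⟨hzC, by simpa [mem_ball, hz] using hv.2⟩, hz⟩
  calc ENNReal.ofReal ρ = volume (Ico (0:ℝ) ρ) := by rw [Real.volume_Ico, sub_zero]
    _ = μH[1] (Ico (0:ℝ) ρ) := by rw [MeasureTheory.hausdorffMeasure_real]
    _ ≤ μH[1] ((fun z => dist z w) '' (C ∩ ball w ρ)) := measure_mono himg
    _ ≤ μH[1] (C ∩ ball w ρ) := by
        simpa using (LipschitzWith.dist_left w).hausdorffMeasure_image_le zero_le_one (C ∩ ball w ρ)

/-- If `K` is closed connected and not contained in the closed ball, then the connected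
component of any `q ∈ K ∩ B̄(x₀,t)` inside `K ∩ B̄(x₀,t)` meets the sphere. -/
lemma reach_sphere {K : Set E2} (hK : IsClosed K) (hKc : IsPreconnected K)
    {x₀ q : E2} {t : ℝ} (hq : q ∈ K ∩ closedBall x₀ t)
    (hout : ¬ K ⊆ closedBall x₀ t) :
    ∃ p ∈ connectedComponentIn (K ∩ closedBall x₀ t) q, dist p x₀ = t := by
  classical
  set M : Set E2 := K ∩ closedBall x₀ t with hM
  have hMc : IsCompact M := (isCompact_closedBall x₀ t).inter_left hK
  haveI : CompactSpace M := isCompact_iff_compactSpace.mp hMc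
  by_contra hcon
  push_neg at hcon
  set q' : M := ⟨q, hq⟩
  set S : Set M := {p : M | dist (p : E2) x₀ = t} with hS
  have hScl : IsClosed S := by
    have : Continuous fun p : M => dist (p : E2) x₀ :=
      (continuous_subtype_val.dist continuous_const)
    exact isClosed_eq this continuous_const
  have hScomp : IsCompact S := hScl.isCompact
  -- the connected component of q' misses S
  have hdisj : S ∩ connectedComponent q' = ∅ := by
    ext p
    simp only [mem_inter_iff, mem_empty_iff_false, iff_false, not_and]
    intro hpS hpc
    have hpin : (p : E2) ∈ connectedComponentIn M q := by
      rw [connectedComponentIn_eq_image hq]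
      exact ⟨p, hpc, rfl⟩
    exact hcon _ hpin hpS
  -- get a single clopen set containing q' and missing S
  have hiInter := connectedComponent_eq_iInter_isClopen q'
  haveI : Nonempty {Z : Set M // IsClopen Z ∧ q' ∈ Z} :=
    ⟨⟨univ, isClopen_univ, mem_univ _⟩⟩
  obtain ⟨i, hi⟩ : ∃ i : {Z : Set M // IsClopen Z ∧ q' ∈ Z}, S ∩ (i : Set M) = ∅ := by
    apply hScomp.elim_directed_family_closed (fun i : {Z : Set M // IsClopen Z ∧ q' ∈ Z} => (i : Set M))
      (fun i => i.2.1.1)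
    · rw [← hiInter]; exact hdisj
    · intro i j
      exact ⟨⟨(i : Set M) ∩ (j : Set M), i.2.1.inter j.2.1, ⟨i.2.2, j.2.2⟩⟩,
        inter_subset_left, inter_subset_right⟩
  obtain ⟨V, ⟨hVclopen, hq'V⟩⟩ := i
  simp only at hi
  -- V is clopen in M, contains q', misses the sphere
  obtain ⟨O, hOopen, hVO⟩ := isOpen_induced_iff.mp hVclopen.2
  set W : Set E2 := Subtype.val '' V with hW
  have hWM : W ⊆ M := by rintro _ ⟨v, _, rfl⟩; exact v.2
  have hWlt : ∀ p ∈ W, dist p x₀ < t := by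
    rintro _ ⟨v, hvV, rfl⟩
    rcases lt_or_eq_of_le (mem_closedBall.mp v.2.2) with h | h
    · exact h
    · exfalso
      have : v ∈ S ∩ V := ⟨h, hvV⟩
      rw [hi] at this
      exact this
  have hWcomp : IsCompact W :=
    (hVclopen.1.isCompact).image continuous_subtype_val
  have hWeq : W = O ∩ ball x₀ t ∩ K := by
    apply Subset.antisymm
    · rintro p hp
      obtain ⟨v, hvV, rfl⟩ := hp
      refine ⟨⟨?_, ?_⟩, v.2.1⟩
      · have : v ∈ (Subtype.val ⁻¹' O : Set M) := hVO ▸ hvV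
        exact this
      · exact mem_ball.mpr (hWlt _ ⟨v, hvV, rfl⟩)
    · rintro p ⟨⟨hpO, hpball⟩, hpK⟩
      have hpM : p ∈ M := ⟨hpK, ball_subset_closedBall hpball⟩
      refine ⟨⟨p, hpM⟩, ?_, rfl⟩
      rw [← hVO]
      exact hpO
  -- transfer to the subtype of K
  haveI : PreconnectedSpace K := Subtype.preconnectedSpace hKc
  set U : Set K := Subtype.val ⁻¹' W with hU
  have hUopen : IsOpen U := by
    have : U = (Subtype.val : K → E2) ⁻¹' (O ∩ ball x₀ t) := by
      ext p
      constructor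
      · intro hp
        have hp2 : (p : E2) ∈ W := hp
        rw [hWeq] at hp2
        exact ⟨hp2.1.1, hp2.1.2⟩
      · intro hp
        have hp2 : (p : E2) ∈ O ∩ ball x₀ t ∩ K := ⟨hp, p.2⟩
        rw [← hWeq] at hp2
        exact hp2
    rw [this]
    exact (hOopen.inter isOpen_ball).preimage continuous_subtype_val
  have hUclosed : IsClosed U := hWcomp.isClosed.preimage continuous_subtype_val
  have hUne : U.Nonempty := ⟨⟨q, hq.1⟩, ⟨q', hq'V, rfl⟩⟩
  have hUuniv : U = univ := IsClopen.eq_univ ⟨hUclosed, hUopen⟩ hUne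
  apply hout
  intro p hp
  have : (⟨p, hp⟩ : K) ∈ U := hUuniv ▸ mem_univ _
  exact (hWM this).2

/-- Purely scalar part of the ellipse estimate. -/
lemma scalar_est {d₁ d₂ h' τ Q r2 r ε : ℝ}
    (hd1 : d₁ ^ 2 = h' ^ 2 + 2 * (τ * Q) + τ ^ 2 * r2)
    (hd2 : d₂ ^ 2 = h' ^ 2 - 2 * ((1 - τ) * Q) + (1 - τ) ^ 2 * r2)
    (hkey1 : 0 ≤ τ * Q) (hkey2 : (1 - τ) * Q ≤ 0)
    (hτ0 : 0 ≤ τ) (hτ1 : τ ≤ 1) (hr2 : r2 = r ^ 2)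
    (hfar : ε * r ≤ h') (hε : 0 < ε) (hε1 : ε ≤ 1) (hr : 0 < r)
    (hd₁0 : 0 ≤ d₁) (hd₂0 : 0 ≤ d₂) :
    r + ε ^ 2 * r ≤ d₁ + d₂ := by
  have hr2pos : 0 < r2 := by rw [hr2]; positivity
  have hA : h' ^ 2 + τ ^ 2 * r2 ≤ d₁ ^ 2 := by linarith
  have hB : h' ^ 2 + (1 - τ) ^ 2 * r2 ≤ d₂ ^ 2 := by linarith
  have hh'0 : 0 ≤ h' := le_trans (by positivity) hfar
  have hprod : h' ^ 2 + τ * (1 - τ) * r2 ≤ d₁ * d₂ := by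
    have hABnonneg : 0 ≤ h' ^ 2 + τ * (1 - τ) * r2 := by
      have : 0 ≤ τ * (1 - τ) := mul_nonneg hτ0 (by linarith)
      nlinarith
    have hcs : (h' ^ 2 + τ * (1 - τ) * r2) ^ 2 ≤
        (h' ^ 2 + τ ^ 2 * r2) * (h' ^ 2 + (1 - τ) ^ 2 * r2) := by
      nlinarith [mul_nonneg (mul_nonneg (sq_nonneg h') hr2pos.le) (sq_nonneg (2 * τ - 1))]
    have hsq : (h' ^ 2 + τ * (1 - τ) * r2) ^ 2 ≤ (d₁ * d₂) ^ 2 := by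
      calc (h' ^ 2 + τ * (1 - τ) * r2) ^ 2 ≤
          (h' ^ 2 + τ ^ 2 * r2) * (h' ^ 2 + (1 - τ) ^ 2 * r2) := hcs
        _ ≤ d₁ ^ 2 * d₂ ^ 2 := mul_le_mul hA hB (by positivity) (by positivity)
        _ = (d₁ * d₂) ^ 2 := by ring
    nlinarith [mul_nonneg hd₁0 hd₂0]
  have hsumsq : r ^ 2 + 4 * h' ^ 2 ≤ (d₁ + d₂) ^ 2 := by nlinarith
  have h2 : (ε * r) ^ 2 ≤ h' ^ 2 := by nlinarith [mul_nonneg hε.le hr.le]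
  have hεsq : ε ^ 2 ≤ 1 := by nlinarith
  have hε4 : ε ^ 4 ≤ ε ^ 2 := by
    nlinarith [mul_le_mul_of_nonneg_right hεsq (sq_nonneg ε)]
  have e1 : ε ^ 4 * r ^ 2 ≤ ε ^ 2 * r ^ 2 :=
    mul_le_mul_of_nonneg_right hε4 (sq_nonneg r)
  have e2 : ε ^ 2 * r ^ 2 ≤ h' ^ 2 := by
    have : (ε * r) ^ 2 = ε ^ 2 * r ^ 2 := by ring
    linarith [h2, this.symm.le]
  have hgoal_sq : (r + ε ^ 2 * r) ^ 2 ≤ (d₁ + d₂) ^ 2 := by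
    have expand : (r + ε ^ 2 * r) ^ 2 = r ^ 2 + 2 * (ε ^ 2 * r ^ 2) + ε ^ 4 * r ^ 2 := by ring
    linarith [hsumsq, e1, e2, expand, sq_nonneg h']
  calc r + ε ^ 2 * r = Real.sqrt ((r + ε ^ 2 * r) ^ 2) := by
        rw [Real.sqrt_sq (by positivity)]
    _ ≤ Real.sqrt ((d₁ + d₂) ^ 2) := Real.sqrt_le_sqrt hgoal_sq
    _ = d₁ + d₂ := Real.sqrt_sq (by positivity)

/-- Ellipse-type estimate: a point `ε r`-far from the segment `[x₀, y]` (with `dist y x₀ = r`)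
has distance-sum to the endpoints at least `r + ε² r`. -/
lemma ellipse_est {x₀ y z : E2} {ε r : ℝ} (hε : 0 < ε) (hε1 : ε ≤ 1) (hr : 0 < r)
    (hyd : dist y x₀ = r)
    (hfar : ∀ q ∈ segment ℝ x₀ y, ε * r ≤ dist z q) :
    r + ε ^ 2 * r ≤ dist z x₀ + dist z y := by
  set v : E2 := y - x₀ with hv
  have hvnorm : ‖v‖ = r := by rw [hv, ← dist_eq_norm]; exact hyd
  set r2 : ℝ := ‖v‖ ^ 2 with hr2
  have hr2pos : 0 < r2 := by rw [hr2, hvnorm]; positivity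
  set P : ℝ := ⟪z - x₀, v⟫ with hP
  set τ : ℝ := max 0 (min 1 (P / r2)) with hτ
  have hτ0 : 0 ≤ τ := le_max_left _ _
  have hτ1 : τ ≤ 1 := by
    rw [hτ]
    rcases le_total (min 1 (P / r2)) 0 with h | h
    · simp [max_eq_left h]
    · rw [max_eq_right h]; exact min_le_left _ _
  set q : E2 := x₀ + τ • v with hq
  have hqseg : q ∈ segment ℝ x₀ y := by
    rw [segment_eq_image']
    exact ⟨τ, ⟨hτ0, hτ1⟩, rfl⟩
  have hkey1 : 0 ≤ τ * (P - τ * r2) := by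
    rcases le_total (P / r2) 0 with h | h
    · have hτe : τ = 0 := by
        rw [hτ, max_eq_left]
        exact (min_le_right _ _).trans h
      simp [hτe]
    · rcases le_total 1 (P / r2) with h1 | h1
      · have hτe : τ = 1 := by rw [hτ, min_eq_left h1, max_eq_right zero_le_one]
        have hP' : r2 ≤ P := by
          have := (le_div_iff₀ hr2pos).mp h1
          linarith
        rw [hτe]; nlinarith
      · have hτe : τ = P / r2 := by rw [hτ, min_eq_right h1, max_eq_right (by positivity)]
        have hz0 : P - τ * r2 = 0 := by rw [hτe]; field_simp; ring
        rw [hz0]; simp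
  have hkey2 : (1 - τ) * (P - τ * r2) ≤ 0 := by
    rcases le_total (P / r2) 0 with h | h
    · have hτe : τ = 0 := by
        rw [hτ, max_eq_left]
        exact (min_le_right _ _).trans h
      have hPle : P ≤ 0 := by
        rcases div_nonpos_iff.mp h with ⟨h1, h2⟩ | ⟨h1, h2⟩
        · linarith
        · exact h1
      rw [hτe]; nlinarith
    · rcases le_total 1 (P / r2) with h1 | h1
      · have hτe : τ = 1 := by rw [hτ, min_eq_left h1, max_eq_right zero_le_one]
        rw [hτe]; norm_num
      · have hτe : τ = P / r2 := by rw [hτ, min_eq_right h1, max_eq_right (by positivity)]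
        have hz0 : P - τ * r2 = 0 := by rw [hτe]; field_simp; ring
        rw [hz0]; simp
  set h' : ℝ := dist z q with hh'
  have hh'far : ε * r ≤ h' := hfar q hqseg
  have hinner_zq : ⟪z - q, v⟫ = P - τ * r2 := by
    rw [hq, hP, hr2]
    have hzq : z - (x₀ + τ • v) = (z - x₀) - τ • v := by abel
    rw [hzq, inner_sub_left, real_inner_smul_left, real_inner_self_eq_norm_sq]
  have hd1 : (dist z x₀) ^ 2 = h' ^ 2 + 2 * (τ * (P - τ * r2)) + τ ^ 2 * r2 := by
    have hzx : z - x₀ = (z - q) + τ • v := by rw [hq]; abel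
    rw [dist_eq_norm, hzx, norm_add_sq_real, real_inner_smul_right, hinner_zq,
      norm_smul, hh', dist_eq_norm]
    simp only [Real.norm_eq_abs]
    rw [mul_pow, sq_abs]
    try ring
  have hd2 : (dist z y) ^ 2 = h' ^ 2 - 2 * ((1 - τ) * (P - τ * r2)) + (1 - τ) ^ 2 * r2 := by
    have hzy : z - y = (z - q) + (τ - 1) • v := by
      rw [hq, hv, sub_smul, one_smul]
      abel
    rw [dist_eq_norm, hzy, norm_add_sq_real, real_inner_smul_right, hinner_zq,
      norm_smul, hh', dist_eq_norm]
    simp only [Real.norm_eq_abs]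
    rw [mul_pow, sq_abs]
    try ring
  exact scalar_est hd1 hd2 hkey1 hkey2 hτ0 hτ1 (by rw [hr2, hvnorm]) hh'far hε hε1 hr
    dist_nonneg dist_nonneg

lemma comp_compact {M : Set E2} (hM : IsCompact M) {x : E2} (hx : x ∈ M) :
    IsCompact (connectedComponentIn M x) := by
  haveI : CompactSpace M := isCompact_iff_compactSpace.mp hM
  rw [connectedComponentIn_eq_image hx]
  exact (isClosed_connectedComponent.isCompact).image continuous_subtype_val

/-- The main contradiction: a preconnected set containing `x₀`, `y` and a point `z` far from
the segment has too much `H¹` measure. -/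
lemma core_contradiction {x₀ y z : E2} {C M : Set E2} {ε r δ β : ℝ}
    (hε : 0 < ε) (hε1 : ε ≤ 1) (hβ : β = ε ^ 2 / 20) (hδ : δ = ε ^ 2 / 80) (hr : 0 < r)
    (hCpre : IsPreconnected C) (hCmeas : MeasurableSet C) (hCM : C ⊆ M)
    (hx₀C : x₀ ∈ C) (hyC : y ∈ C) (hzC : z ∈ C)
    (hyd : dist y x₀ = r)
    (hUB : μH[1] M ≤ ENNReal.ofReal ((1 + 2 * δ) * ((1 + β) * r)))
    (hfar : ∀ q ∈ segment ℝ x₀ y, ε * r ≤ dist z q) : False := by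
  have hell : r + ε ^ 2 * r ≤ dist z x₀ + dist z y := ellipse_est hε hε1 hr hyd hfar
  set d₁ : ℝ := dist z x₀ with hd₁
  set d₂ : ℝ := dist z y with hd₂
  have t1 : d₁ ≤ d₂ + r := by
    have := dist_triangle z y x₀
    rw [hyd] at this
    exact this
  have t2 : d₂ ≤ d₁ + r := by
    have := dist_triangle z x₀ y
    rw [dist_comm x₀ y, hyd] at this
    exact this
  set a : ℝ := (r + d₁ - d₂) / 2 with ha
  set b : ℝ := (r + d₂ - d₁) / 2 with hb
  set c : ℝ := (d₁ + d₂ - r) / 2 with hc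
  have ha0 : 0 ≤ a := by rw [ha]; linarith
  have hb0 : 0 ≤ b := by rw [hb]; linarith
  have hc0 : 0 ≤ c := by
    rw [hc]
    nlinarith [mul_pos (mul_pos hε hε) hr]
  have m1 : ENNReal.ofReal a ≤ μH[1] (C ∩ ball x₀ a) :=
    meas_ball_ge hCpre hx₀C hyC (by rw [hyd, ha]; linarith)
  have m2 : ENNReal.ofReal b ≤ μH[1] (C ∩ ball y b) :=
    meas_ball_ge hCpre hyC hx₀C (by rw [dist_comm x₀ y, hyd, hb]; linarith)
  have m3 : ENNReal.ofReal c ≤ μH[1] (C ∩ ball z c) :=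
    meas_ball_ge hCpre hzC hx₀C (by rw [dist_comm x₀ z, ← hd₁, hc]; linarith)
  have D12 : Disjoint (ball x₀ a) (ball y b) := by
    apply ball_disjoint_ball
    rw [dist_comm x₀ y, hyd, ha, hb]; linarith
  have D13 : Disjoint (ball x₀ a) (ball z c) := by
    apply ball_disjoint_ball
    rw [dist_comm x₀ z, ← hd₁, ha, hc]; linarith
  have D23 : Disjoint (ball y b) (ball z c) := by
    apply ball_disjoint_ball
    rw [dist_comm y z, ← hd₂, hb, hc]; linarith
  have hdj12 : Disjoint (C ∩ ball x₀ a) (C ∩ ball y b) :=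
    D12.mono inter_subset_right inter_subset_right
  have hdj13 : Disjoint (C ∩ ball x₀ a) (C ∩ ball z c) :=
    D13.mono inter_subset_right inter_subset_right
  have hdj23 : Disjoint (C ∩ ball y b) (C ∩ ball z c) :=
    D23.mono inter_subset_right inter_subset_right
  have hmeas2 : MeasurableSet (C ∩ ball y b) := hCmeas.inter measurableSet_ball
  have hmeas3 : MeasurableSet (C ∩ ball z c) := hCmeas.inter measurableSet_ball
  have hsum : μH[1] (C ∩ ball x₀ a) + μH[1] (C ∩ ball y b) + μH[1] (C ∩ ball z c)
      ≤ μH[1] C := by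
    have e1 : μH[1] ((C ∩ ball x₀ a) ∪ (C ∩ ball y b) ∪ (C ∩ ball z c)) =
        μH[1] (C ∩ ball x₀ a) + μH[1] (C ∩ ball y b) + μH[1] (C ∩ ball z c) := by
      rw [measure_union (disjoint_union_left.mpr ⟨hdj13, hdj23⟩) hmeas3,
        measure_union hdj12 hmeas2]
    rw [← e1]
    apply measure_mono
    intro p hp
    rcases hp with (⟨h, _⟩ | ⟨h, _⟩) | ⟨h, _⟩ <;> exact h
  have habc : ENNReal.ofReal (r + ε ^ 2 * r / 2) ≤
      ENNReal.ofReal a + ENNReal.ofReal b + ENNReal.ofReal c := by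
    rw [← ENNReal.ofReal_add ha0 hb0, ← ENNReal.ofReal_add (by linarith) hc0]
    apply ENNReal.ofReal_le_ofReal
    rw [ha, hb, hc]
    linarith
  have hchain : ENNReal.ofReal (r + ε ^ 2 * r / 2) ≤
      ENNReal.ofReal ((1 + 2 * δ) * ((1 + β) * r)) := by
    refine le_trans habc (le_trans ?_ (le_trans (measure_mono hCM) hUB))
    exact le_trans (add_le_add (add_le_add m1 m2) m3) hsum
  have hreal : r + ε ^ 2 * r / 2 ≤ (1 + 2 * δ) * ((1 + β) * r) := by
    have hRnn : (0:ℝ) ≤ (1 + 2 * δ) * ((1 + β) * r) := by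
      rw [hδ, hβ]; positivity
    exact (ENNReal.ofReal_le_ofReal_iff hRnn).mp hchain
  rw [hδ, hβ] at hreal
  have hεsq : ε ^ 2 ≤ 1 := by nlinarith
  nlinarith [hreal, mul_pos hr (mul_pos hε hε), sq_nonneg ε,
    mul_le_mul_of_nonneg_right hεsq (mul_pos hr (mul_pos hε hε)).le]

/-- Merging of components: under the density upper bound, any point of `K ∩ B̄(x₀,r)` lies in
the connected component of `x₀` in `K ∩ B̄(x₀,t)`. -/
lemma merge_comp {K : Set E2} (hK : IsClosed K) (hKc : IsPreconnected K)
    {x₀ q : E2} {r t δ : ℝ} (hr : 0 < r) (ht : r < t) (hδ0 : 0 ≤ δ)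
    (hx₀ : x₀ ∈ K) (hq : q ∈ K ∩ closedBall x₀ r)
    (hUB : μH[1] (K ∩ closedBall x₀ t) ≤ ENNReal.ofReal ((1 + 2 * δ) * t))
    (hnum : (1 + 2 * δ) * t < 2 * t - r) :
    q ∈ connectedComponentIn (K ∩ closedBall x₀ t) x₀ := by
  have ht0 : 0 < t := hr.trans ht
  set M : Set E2 := K ∩ closedBall x₀ t with hM
  have hMc : IsCompact M := (isCompact_closedBall x₀ t).inter_left hK
  have hx₀M : x₀ ∈ M := ⟨hx₀, mem_closedBall_self ht0.le⟩
  have hqM : q ∈ M := ⟨hq.1, closedBall_subset_closedBall ht.le hq.2⟩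
  by_contra hqC
  by_cases hsub : K ⊆ closedBall x₀ t
  · exact hqC (hKc.subset_connectedComponentIn hx₀ (subset_inter (Set.Subset.refl K) hsub) hq.1)
  obtain ⟨p₀, hp₀C, hp₀d⟩ := reach_sphere hK hKc hx₀M hsub
  obtain ⟨p₁, hp₁C, hp₁d⟩ := reach_sphere hK hKc hqM hsub
  set C₀ := connectedComponentIn M x₀ with hC₀
  set C₁ := connectedComponentIn M q with hC₁
  have hdisj : Disjoint C₀ C₁ := by
    rw [Set.disjoint_left]
    intro u hu₀ hu₁
    have e1 : connectedComponentIn M x₀ = connectedComponentIn M u :=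
      connectedComponentIn_eq hu₀
    have e2 : connectedComponentIn M q = connectedComponentIn M u :=
      connectedComponentIn_eq hu₁
    exact hqC (by rw [hC₀, e1, ← e2]; exact mem_connectedComponentIn hqM)
  have m0 : ENNReal.ofReal t ≤ μH[1] C₀ := by
    have := meas_ge_lip isPreconnected_connectedComponentIn
      (LipschitzWith.dist_left x₀) (mem_connectedComponentIn hx₀M) hp₀C
    simpa [hp₀d, dist_self] using this
  have m1 : ENNReal.ofReal (t - r) ≤ μH[1] C₁ := by
    have hle := meas_ge_lip isPreconnected_connectedComponentIn
      (LipschitzWith.dist_left x₀) (mem_connectedComponentIn hqM) hp₁C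
    refine le_trans ?_ hle
    apply ENNReal.ofReal_le_ofReal
    have : dist q x₀ ≤ r := hq.2
    simp only [hp₁d]
    linarith
  have hsum : ENNReal.ofReal t + ENNReal.ofReal (t - r) ≤ μH[1] M := by
    have hm1 : MeasurableSet C₁ := (comp_compact hMc hqM).isClosed.measurableSet
    calc ENNReal.ofReal t + ENNReal.ofReal (t - r) ≤ μH[1] C₀ + μH[1] C₁ :=
          add_le_add m0 m1
      _ = μH[1] (C₀ ∪ C₁) := (measure_union hdisj hm1).symm
      _ ≤ μH[1] M := measure_mono (union_subset
          (connectedComponentIn_subset _ _) (connectedComponentIn_subset _ _))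
  have hup : ENNReal.ofReal (2 * t - r) ≤ ENNReal.ofReal ((1 + 2 * δ) * t) := by
    rw [show (2 * t - r : ℝ) = t + (t - r) by ring,
      ENNReal.ofReal_add ht0.le (by linarith)]
    exact le_trans hsum hUB
  have := (ENNReal.ofReal_le_ofReal_iff (by positivity)).mp hup
  linarith

/-- From the open-ball density bound to a closed-ball bound at the same scale. -/
lemma UB_closed {K : Set E2} {x₀ : E2} {r₀ c : ℝ} (hc : 0 ≤ c)
    (h : ∀ s : ℝ, 0 < s → s < r₀ → μH[1] (K ∩ ball x₀ s) ≤ ENNReal.ofReal (c * s))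
    {t : ℝ} (ht : 0 < t) (htr : t < r₀) :
    μH[1] (K ∩ closedBall x₀ t) ≤ ENNReal.ofReal (c * t) := by
  apply ENNReal.le_of_forall_pos_le_add
  intro ε hε _
  have hε' : (0:ℝ) < ε := hε
  set τ : ℝ := min ((t + r₀) / 2) (t + ε / (c + 1)) with hτ
  have hτt : t < τ := by
    have hpos : (0:ℝ) < (ε:ℝ) / (c + 1) := by positivity
    exact lt_min (by linarith) (by linarith)
  have hτr : τ < r₀ := lt_of_le_of_lt (min_le_left _ _) (by linarith)
  have h3 : c * τ ≤ c * t + ε := by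
    have hτ2 : τ ≤ t + ε / (c + 1) := min_le_right _ _
    have : c * τ ≤ c * (t + ε / (c + 1)) := by
      apply mul_le_mul_of_nonneg_left hτ2 hc
    have hfrac : c * (ε / (c + 1)) ≤ ε := by
      rw [div_eq_mul_inv]
      have h4 : c * ((ε:ℝ) * (c + 1)⁻¹) = (c / (c + 1)) * ε := by field_simp
      rw [h4]
      have : c / (c + 1) ≤ 1 := by
        rw [div_le_one (by linarith)]; linarith
      nlinarith
    nlinarith [this, hfrac]
  calc μH[1] (K ∩ closedBall x₀ t) ≤ μH[1] (K ∩ ball x₀ τ) :=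
        measure_mono (inter_subset_inter_right _ (closedBall_subset_ball hτt))
    _ ≤ ENNReal.ofReal (c * τ) := h τ (ht.trans hτt) hτr
    _ ≤ ENNReal.ofReal (c * t + ε) := ENNReal.ofReal_le_ofReal h3
    _ = ENNReal.ofReal (c * t) + ENNReal.ofReal ε :=
        ENNReal.ofReal_add (by positivity) hε'.le
    _ = ENNReal.ofReal (c * t) + ε := by rw [ENNReal.ofReal_coe_nnreal]

/-- If `K ⊆ ℝ²` is closed, connected, has Hausdorff 1-density 1/2 at `x₀ ∈ K`,
and `x r` is a choice of point of `K ∩ ∂B(x₀,r)` for all small `r > 0`, then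
`(1/r) d_H(K ∩ closure B(x₀,r), [x r, x₀]) → 0` as `r → 0⁺`. -/
theorem stmt0
    (K : Set (EuclideanSpace ℝ (Fin 2))) (x₀ : EuclideanSpace ℝ (Fin 2))
    (hK : IsClosed K) (hKconn : IsConnected K) (hx₀ : x₀ ∈ K)
    (hdens : Filter.limsup
      (fun r : ℝ => μH[1] (K ∩ Metric.ball x₀ r) / ENNReal.ofReal (2 * r))
      (𝓝[>] (0:ℝ)) = 1/2)
    (x : ℝ → EuclideanSpace ℝ (Fin 2))
    (hx : ∀ᶠ r in 𝓝[>] (0:ℝ), x r ∈ K ∩ Metric.sphere x₀ r) :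
    Tendsto
      (fun r : ℝ =>
        (1/r) * Metric.hausdorffDist (K ∩ Metric.closedBall x₀ r) (segment ℝ (x r) x₀))
      (𝓝[>] (0:ℝ)) (𝓝 0) := by
  rw [Metric.tendsto_nhds]
  intro ε₀ hε₀
  set ε : ℝ := min (ε₀ / 2) 1 with hεdef
  have hε : 0 < ε := lt_min (by linarith) one_pos
  have hε1 : ε ≤ 1 := min_le_right _ _
  have hεε₀ : ε < ε₀ := lt_of_le_of_lt (min_le_left _ _) (by linarith)
  set δ : ℝ := ε ^ 2 / 80 with hδdef
  set β : ℝ := ε ^ 2 / 20 with hβdef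
  have hδ0 : 0 < δ := by rw [hδdef]; positivity
  have hβ0 : 0 < β := by rw [hβdef]; positivity
  have hβ1 : β ≤ 1 / 20 := by rw [hβdef]; nlinarith
  -- step 1: from the limsup hypothesis, an eventual density upper bound
  have h12 : (1 / 2 : ℝ≥0∞) = ENNReal.ofReal (1 / 2) := by
    rw [show (1/2 : ℝ) = 2⁻¹ by norm_num, ENNReal.ofReal_inv_of_pos (by norm_num)]
    norm_num
  have hlt : Filter.limsup
      (fun r : ℝ => μH[1] (K ∩ Metric.ball x₀ r) / ENNReal.ofReal (2 * r))
      (𝓝[>] (0:ℝ)) < ENNReal.ofReal (1 / 2 + δ) := by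
    rw [hdens, h12]
    exact ENNReal.ofReal_lt_ofReal_iff_of_nonneg (by norm_num) |>.mpr (by linarith)
  have hev := Filter.eventually_lt_of_limsup_lt hlt
  have hev2 : ∀ᶠ s in 𝓝[>] (0:ℝ),
      μH[1] (K ∩ ball x₀ s) ≤ ENNReal.ofReal ((1 + 2 * δ) * s) := by
    filter_upwards [hev, self_mem_nhdsWithin] with s h1 h2
    have hs : (0:ℝ) < s := h2
    have hb0 : ENNReal.ofReal (2 * s) ≠ 0 :=
      (ENNReal.ofReal_pos.mpr (by linarith)).ne'
    have h3 := (ENNReal.div_lt_iff (Or.inl hb0) (Or.inl ENNReal.ofReal_ne_top)).mp h1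
    rw [← ENNReal.ofReal_mul (by linarith)] at h3
    have heq : (1 / 2 + δ) * (2 * s) = (1 + 2 * δ) * s := by ring
    rw [heq] at h3
    exact h3.le
  obtain ⟨r₀, hr₀, hsub⟩ := mem_nhdsGT_iff_exists_Ioc_subset.mp hev2
  have hr₀0 : (0:ℝ) < r₀ := hr₀
  have Hb : ∀ s : ℝ, 0 < s → s < r₀ →
      μH[1] (K ∩ ball x₀ s) ≤ ENNReal.ofReal ((1 + 2 * δ) * s) :=
    fun s h1 h2 => hsub ⟨h1, h2.le⟩
  -- step 2: the eventual estimate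
  filter_upwards [hx, Ioo_mem_nhdsGT_of_mem (show (0:ℝ) ∈ Ico 0 (r₀ / 2) from
    ⟨le_refl _, by linarith⟩)] with r hxr hrmem
  have hr : 0 < r := hrmem.1
  have hrr₀ : r < r₀ / 2 := hrmem.2
  set y : EuclideanSpace ℝ (Fin 2) := x r with hy
  have hyK : y ∈ K := hxr.1
  have hyd : dist y x₀ = r := hxr.2
  set t : ℝ := (1 + β) * r with ht_def
  have hrt : r < t := by rw [ht_def]; nlinarith
  have ht0 : 0 < t := hr.trans hrt
  have htr₀ : t < r₀ := by rw [ht_def]; nlinarith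
  have hUBt : μH[1] (K ∩ closedBall x₀ t) ≤ ENNReal.ofReal ((1 + 2 * δ) * t) :=
    UB_closed (by positivity) Hb ht0 htr₀
  have hnum : (1 + 2 * δ) * t < 2 * t - r := by
    rw [ht_def, hδdef, hβdef]
    nlinarith [mul_pos hr (mul_pos hε hε), sq_nonneg ε]
  set M : Set (EuclideanSpace ℝ (Fin 2)) := K ∩ closedBall x₀ t with hM
  have hMc : IsCompact M := (isCompact_closedBall x₀ t).inter_left hK
  have hx₀M : x₀ ∈ M := ⟨hx₀, mem_closedBall_self ht0.le⟩
  set C : Set (EuclideanSpace ℝ (Fin 2)) := connectedComponentIn M x₀ with hC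
  have hCpre : IsPreconnected C := isPreconnected_connectedComponentIn
  have hCmeas : MeasurableSet C := (comp_compact hMc hx₀M).isClosed.measurableSet
  have hCM : C ⊆ M := connectedComponentIn_subset _ _
  have hx₀C : x₀ ∈ C := mem_connectedComponentIn hx₀M
  have hmerge : ∀ q ∈ K ∩ closedBall x₀ r, q ∈ C := fun q hq =>
    merge_comp hK hKconn.isPreconnected hr hrt hδ0.le hx₀ hq hUBt hnum
  have hyC : y ∈ C := hmerge y ⟨hyK, by rw [mem_closedBall, hyd]⟩
  have hUBcore : μH[1] M ≤ ENNReal.ofReal ((1 + 2 * δ) * ((1 + β) * r)) := by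
    rw [← ht_def]; exact hUBt
  -- direction 1 : every point of `K ∩ B̄(x₀,r)` is close to the segment
  have Hdir1 : ∀ z ∈ K ∩ closedBall x₀ r, ∃ p ∈ segment ℝ (x r) x₀, dist z p ≤ ε * r := by
    intro z hz
    by_contra hcon
    push_neg at hcon
    refine core_contradiction hε hε1 hβdef hδdef hr hCpre hCmeas hCM hx₀C hyC
      (hmerge z hz) hyd hUBcore ?_
    intro q hq
    rw [segment_symm] at hq
    exact (hcon q hq).le
  -- direction 2 : every point of the segment is close to `K ∩ B̄(x₀,r)`
  have Hdir2 : ∀ p ∈ segment ℝ (x r) x₀, ∃ z ∈ K ∩ closedBall x₀ r, dist p z ≤ ε * r := by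
    intro p hp
    rw [segment_symm, segment_eq_image'] at hp
    obtain ⟨τ, ⟨hτ0, hτ1⟩, rfl⟩ := hp
    set v : EuclideanSpace ℝ (Fin 2) := y - x₀ with hv
    have hvnorm : ‖v‖ = r := by rw [hv, ← dist_eq_norm]; exact hyd
    by_cases hcase : 1 - ε ≤ τ
    · refine ⟨y, ⟨hyK, by rw [mem_closedBall, hyd]⟩, ?_⟩
      have : dist (x₀ + τ • v) y = (1 - τ) * r := by
        rw [dist_eq_norm, show x₀ + τ • v - y = (τ - 1) • v by rw [hv, sub_smul, one_smul]; abel,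
          norm_smul, Real.norm_eq_abs, abs_of_nonpos (by linarith), hvnorm]
        ring
      rw [this]
      nlinarith
    · push_neg at hcase
      by_contra hcon
      push_neg at hcon
      -- intermediate value: find w ∈ C with the same projection as p
      set F : EuclideanSpace ℝ (Fin 2) → ℝ := fun w => ⟪w - x₀, v⟫ with hF
      have hFcont : Continuous F := (continuous_id.sub continuous_const).inner continuous_const
      have hFx₀ : F x₀ = 0 := by simp [hF]
      have hFy : F y = r ^ 2 := by
        simp only [hF, hv]
        rw [real_inner_self_eq_norm_sq, hvnorm]
      have hFp : F (x₀ + τ • v) = τ * r ^ 2 := by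
        simp only [hF, add_sub_cancel_left, real_inner_smul_left]
        rw [real_inner_self_eq_norm_sq, hvnorm]
      have himg : Icc (F x₀) (F y) ⊆ F '' C :=
        hCpre.intermediate_value hx₀C hyC hFcont.continuousOn
      have hmem : τ * r ^ 2 ∈ Icc (F x₀) (F y) := by
        rw [hFx₀, hFy]
        constructor
        · positivity
        · nlinarith
      obtain ⟨w, hwC, hwF⟩ := himg hmem
      -- w is far from p
      have hwp : ε * r ≤ dist w (x₀ + τ • v) := by
        by_contra hclose
        push_neg at hclose
        have hpd : dist (x₀ + τ • v) x₀ = τ * r := by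
          rw [dist_eq_norm, add_sub_cancel_left, norm_smul, Real.norm_eq_abs,
            abs_of_nonneg hτ0, hvnorm]
        have hwball : dist w x₀ ≤ r := by
          have := dist_triangle w (x₀ + τ • v) x₀
          rw [hpd] at this
          nlinarith
        have hwK : w ∈ K := (hCM hwC).1
        have := hcon w ⟨hwK, mem_closedBall.mpr hwball⟩
        rw [dist_comm] at this
        linarith
      -- w is far from the whole segment
      have hworth : ∀ q ∈ segment ℝ x₀ y, ε * r ≤ dist w q := by
        intro q hq
        rw [segment_eq_image'] at hq
        obtain ⟨σ, ⟨hσ0, hσ1⟩, rfl⟩ := hq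
        have hcross : ⟪w - (x₀ + τ • v), v⟫ = 0 := by
          have : w - (x₀ + τ • v) = (w - x₀) - τ • v := by abel
          rw [this, inner_sub_left, real_inner_smul_left, real_inner_self_eq_norm_sq, hvnorm]
          have : ⟪w - x₀, v⟫ = τ * r ^ 2 := hwF
          rw [this]; ring
        have hsq : (dist w (x₀ + τ • v)) ^ 2 ≤ (dist w (x₀ + σ • v)) ^ 2 := by
          have hdecomp : w - (x₀ + σ • v) = (w - (x₀ + τ • v)) + (τ - σ) • v := by
            rw [sub_smul]; abel
          rw [dist_eq_norm, dist_eq_norm, hdecomp, norm_add_sq_real, real_inner_smul_right,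
            hcross, norm_smul, Real.norm_eq_abs, mul_pow, sq_abs]
          nlinarith [sq_nonneg ((τ - σ) * ‖v‖)]
        calc ε * r ≤ dist w (x₀ + τ • v) := hwp
          _ = Real.sqrt ((dist w (x₀ + τ • v)) ^ 2) := (Real.sqrt_sq dist_nonneg).symm
          _ ≤ Real.sqrt ((dist w (x₀ + σ • v)) ^ 2) := Real.sqrt_le_sqrt hsq
          _ = dist w (x₀ + σ • v) := Real.sqrt_sq dist_nonneg
      exact core_contradiction hε hε1 hβdef hδdef hr hCpre hCmeas hCM hx₀C hyC
        hwC hyd hUBcore hworth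
  -- conclude
  have hdH : hausdorffDist (K ∩ closedBall x₀ r) (segment ℝ (x r) x₀) ≤ ε * r :=
    hausdorffDist_le_of_mem_dist (by positivity) Hdir1 Hdir2
  have hfn0 : 0 ≤ (1 / r) * hausdorffDist (K ∩ closedBall x₀ r) (segment ℝ (x r) x₀) := by
    have := hausdorffDist_nonneg (s := K ∩ closedBall x₀ r) (t := segment ℝ (x r) x₀)
    positivity
  rw [Real.dist_0_eq_abs, abs_of_nonneg hfn0]
  have : (1 / r) * hausdorffDist (K ∩ closedBall x₀ r) (segment ℝ (x r) x₀)
      ≤ (1 / r) * (ε * r) := by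
    apply mul_le_mul_of_nonneg_left hdH (by positivity)
  have heq : (1 / r) * (ε * r) = ε := by field_simp
  linarith [hεε₀]
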